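/- Let D be a nonempty bounded open subset of ℝ^d and let p : (0,∞) × D × D → (0,∞) satisfy the Chapman–Kolmogorov (semigroup) property with respect to Lebesgue measure on D: p(s+t,x,y) = ∫_D p(s,x,z) p(t,z,y) dz for all s,t > 0 and x,y ∈ D, with p(t,·,·) continuous and bounded on D × D for each t > 0. Let λ₀ < 0 and let φ, ψ : D → (0,∞) be bounded continuous functions with ∫_D φ(z)² dz = ∫_D ψ(z)² dz = 1 satisfying ∫_D p(t,x,z) φ(z) dz = e^{λ₀ t} φ(x) and ∫_D p(t,z,y) ψ(z) dz = e^{λ₀ t} ψ(y) for all t > 0 and x,y ∈ D. Assume that for every t > 0 there is c_t ≥ 1 with c_t^{-1} φ(x) ψ(y) ≤ p(t,x,y) ≤ c_t φ(x) ψ(y) for all x,y ∈ D. Then there exist positive constants c and ν such that | (e^{-λ₀ t} ∫_D φ(z) ψ(z) dz) · p(t,x,y)/(φ(x) ψ(y)) − 1 | ≤ c e^{-ν t} for all t > 1 and all x,y ∈ D. -/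

import Mathlib

set_option maxHeartbeats 1000000

open MeasureTheory Set

lemma my_integrableOn {α : Type*} [MeasurableSpace α] {μ : Measure α} {D : Set α}
    {f : α → ℝ} (hD : MeasurableSet D) (hfin : μ D < ⊤)
    (hm : AEMeasurable f (μ.restrict D)) {M : ℝ} (hb : ∀ z ∈ D, |f z| ≤ M) :
    IntegrableOn f D μ :=
  ⟨hm.aestronglyMeasurable,
    HasFiniteIntegral.restrict_of_bounded (C := M) hfin
      ((ae_restrict_iff' hD).2 (Filter.Eventually.of_forall fun z hz => by
        simpa [Real.norm_eq_abs] using hb z hz))⟩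

/-- **Theorem 3.10 of Kim–Song**: for the transition density `p` of a killed non-symmetric
Lévy process on a nonempty bounded open set `D` with two-sided intrinsic
ultracontractivity bounds `c_t⁻¹ φ(x)ψ(y) ≤ p(t,x,y) ≤ c_t φ(x)ψ(y)` in terms of the
`L²`-normalized principal eigenfunctions `φ, ψ` (with common eigenvalue `λ₀ < 0`), there
exist `c, ν > 0` such that
`|(e^{-λ₀ t} ∫_D φψ) p(t,x,y)/(φ(x)ψ(y)) − 1| ≤ c e^{-ν t}` for all `t > 1`, `x,y ∈ D`. -/
theorem exponential_convergence_to_equilibrium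
    {d : ℕ} (D : Set (EuclideanSpace ℝ (Fin d)))
    (hne : D.Nonempty) (hopen : IsOpen D) (hbdd : Bornology.IsBounded D)
    (p : ℝ → EuclideanSpace ℝ (Fin d) → EuclideanSpace ℝ (Fin d) → ℝ)
    (hppos : ∀ t > (0:ℝ), ∀ x ∈ D, ∀ y ∈ D, 0 < p t x y)
    (hpcont : ∀ t > (0:ℝ),
      ContinuousOn (fun q : EuclideanSpace ℝ (Fin d) × EuclideanSpace ℝ (Fin d) =>
        p t q.1 q.2) (D ×ˢ D))
    (hpbdd : ∀ t > (0:ℝ), ∃ M : ℝ, ∀ x ∈ D, ∀ y ∈ D, p t x y ≤ M)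
    (hCK : ∀ s > (0:ℝ), ∀ t > (0:ℝ), ∀ x ∈ D, ∀ y ∈ D,
      p (s + t) x y = ∫ z in D, p s x z * p t z y)
    (lam₀ : ℝ) (hlam₀ : lam₀ < 0)
    (φ ψ : EuclideanSpace ℝ (Fin d) → ℝ)
    (hφpos : ∀ x ∈ D, 0 < φ x) (hψpos : ∀ y ∈ D, 0 < ψ y)
    (hφbdd : ∃ M : ℝ, ∀ x ∈ D, φ x ≤ M) (hψbdd : ∃ M : ℝ, ∀ y ∈ D, ψ y ≤ M)
    (hφcont : ContinuousOn φ D) (hψcont : ContinuousOn ψ D)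
    (hφnorm : (∫ z in D, (φ z) ^ 2) = 1) (hψnorm : (∫ z in D, (ψ z) ^ 2) = 1)
    (hφeig : ∀ t > (0:ℝ), ∀ x ∈ D, (∫ z in D, p t x z * φ z) = Real.exp (lam₀ * t) * φ x)
    (hψeig : ∀ t > (0:ℝ), ∀ y ∈ D, (∫ z in D, p t z y * ψ z) = Real.exp (lam₀ * t) * ψ y)
    (hIU : ∀ t > (0:ℝ), ∃ c : ℝ, 1 ≤ c ∧ ∀ x ∈ D, ∀ y ∈ D,
      c⁻¹ * (φ x * ψ y) ≤ p t x y ∧ p t x y ≤ c * (φ x * ψ y)) :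
    ∃ c > (0:ℝ), ∃ ν > (0:ℝ), ∀ t > (1:ℝ), ∀ x ∈ D, ∀ y ∈ D,
      |Real.exp (-(lam₀ * t)) * (∫ z in D, φ z * ψ z) * p t x y / (φ x * ψ y) - 1|
        ≤ c * Real.exp (-(ν * t)) := by
  classical
  obtain ⟨x₀, hx₀⟩ := hne
  have hD : MeasurableSet D := hopen.measurableSet
  have hfin : volume D < ⊤ := hbdd.measure_lt_top
  obtain ⟨Mφ, hMφ⟩ := hφbdd
  obtain ⟨Mψ, hMψ⟩ := hψbdd
  -- basic measurability facts
  have hamφ : AEMeasurable φ (volume.restrict D) := hφcont.aemeasurable hD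
  have hamψ : AEMeasurable ψ (volume.restrict D) := hψcont.aemeasurable hD
  have ham1 : ∀ t, 0 < t → ∀ x ∈ D, AEMeasurable (fun z => p t x z) (volume.restrict D) := by
    intro t ht x hx
    have : ContinuousOn (fun z => p t x z) D := by
      have hmap : MapsTo (fun z : EuclideanSpace ℝ (Fin d) => ((x, z) :
          EuclideanSpace ℝ (Fin d) × EuclideanSpace ℝ (Fin d))) D (D ×ˢ D) :=
        fun z hz => ⟨hx, hz⟩
      exact (hpcont t ht).comp
        (Continuous.continuousOn (continuous_const.prodMk continuous_id)) hmap
    exact this.aemeasurable hD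
  have ham2 : ∀ t, 0 < t → ∀ y ∈ D, AEMeasurable (fun z => p t z y) (volume.restrict D) := by
    intro t ht y hy
    have : ContinuousOn (fun z => p t z y) D := by
      have hmap : MapsTo (fun z : EuclideanSpace ℝ (Fin d) => ((z, y) :
          EuclideanSpace ℝ (Fin d) × EuclideanSpace ℝ (Fin d))) D (D ×ˢ D) :=
        fun z hz => ⟨hz, hy⟩
      exact (hpcont t ht).comp
        (Continuous.continuousOn (continuous_id.prodMk continuous_const)) hmap
    exact this.aemeasurable hD
  -- bounded+measurable predicate and integrability
  set BM : (EuclideanSpace ℝ (Fin d) → ℝ) → Prop :=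
    fun f => AEMeasurable f (volume.restrict D) ∧ ∃ M : ℝ, ∀ z ∈ D, |f z| ≤ M with hBM
  have BMint : ∀ f, BM f → IntegrableOn f D volume := by
    rintro f ⟨hm, M, hM⟩; exact my_integrableOn hD hfin hm hM
  have BMmul : ∀ f g, BM f → BM g → BM (fun z => f z * g z) := by
    rintro f g ⟨hf, Mf, hMf⟩ ⟨hg, Mg, hMg⟩
    refine ⟨hf.mul hg, |Mf| * |Mg|, fun z hz => ?_⟩
    rw [abs_mul]
    have h1 : |f z| ≤ |Mf| := le_trans (hMf z hz) (le_abs_self _)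
    have h2 : |g z| ≤ |Mg| := le_trans (hMg z hz) (le_abs_self _)
    exact mul_le_mul h1 h2 (abs_nonneg _) (abs_nonneg _)
  have BMconst : ∀ (c : ℝ) (f), BM f → BM (fun z => c * f z) := by
    rintro c f ⟨hf, Mf, hMf⟩
    exact ⟨(aemeasurable_const).mul hf, |c| * |Mf|, fun z hz => by
      rw [abs_mul]
      exact mul_le_mul_of_nonneg_left (le_trans (hMf z hz) (le_abs_self _)) (abs_nonneg _)⟩
  have BMsub : ∀ f g, BM f → BM g → BM (fun z => f z - g z) := by
    rintro f g ⟨hf, Mf, hMf⟩ ⟨hg, Mg, hMg⟩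
    refine ⟨hf.sub hg, |Mf| + |Mg|, fun z hz => ?_⟩
    calc |f z - g z| ≤ |f z| + |g z| := abs_sub _ _
      _ ≤ |Mf| + |Mg| := add_le_add (le_trans (hMf z hz) (le_abs_self _))
          (le_trans (hMg z hz) (le_abs_self _))
  have BMφ : BM φ := ⟨hamφ, Mφ, fun z hz => by
    rw [abs_of_pos (hφpos z hz)]; exact hMφ z hz⟩
  have BMψ : BM ψ := ⟨hamψ, Mψ, fun z hz => by
    rw [abs_of_pos (hψpos z hz)]; exact hMψ z hz⟩
  have BMp1 : ∀ t, 0 < t → ∀ x ∈ D, BM (fun z => p t x z) := by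
    intro t ht x hx
    obtain ⟨M, hM⟩ := hpbdd t ht
    exact ⟨ham1 t ht x hx, M, fun z hz => by
      rw [abs_of_pos (hppos t ht x hx z hz)]; exact hM x hx z hz⟩
  have BMp2 : ∀ t, 0 < t → ∀ y ∈ D, BM (fun z => p t z y) := by
    intro t ht y hy
    obtain ⟨M, hM⟩ := hpbdd t ht
    exact ⟨ham2 t ht y hy, M, fun z hz => by
      rw [abs_of_pos (hppos t ht z hz y hy)]; exact hM z hz y hy⟩
  -- the mass m
  set m : ℝ := ∫ z in D, φ z * ψ z with hm_def
  have hφψint : IntegrableOn (fun z => φ z * ψ z) D volume := BMint _ (BMmul _ _ BMφ BMψ)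
  have hm : 0 < m := by
    rw [hm_def]
    rw [setIntegral_pos_iff_support_of_nonneg_ae ((ae_restrict_iff' hD).2
      (Filter.Eventually.of_forall fun z hz =>
        le_of_lt (mul_pos (hφpos z hz) (hψpos z hz)))) hφψint]
    refine lt_of_lt_of_le (hopen.measure_pos volume ⟨x₀, hx₀⟩) (measure_mono ?_)
    intro z hz
    exact ⟨ne_of_gt (mul_pos (hφpos z hz) (hψpos z hz)), hz⟩
  have hψφ : (∫ z in D, ψ z * φ z) = m := by
    rw [hm_def]; congr 1; funext z; ring
  -- IU constants
  obtain ⟨c₁, hc₁, hIU1⟩ := hIU 1 one_pos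
  obtain ⟨c₂, hc₂, hIU2⟩ := hIU (1/2) (by norm_num)
  set a : ℝ := c₁⁻¹ * Real.exp (-lam₀) with ha_def
  have ha : 0 < a := mul_pos (inv_pos.2 (lt_of_lt_of_le one_pos hc₁)) (Real.exp_pos _)
  have hA : ∀ x ∈ D, ∀ z ∈ D,
      a * (φ x * ψ z) ≤ Real.exp (-(lam₀ * 1)) * p 1 x z := by
    intro x hx z hz
    have h := (hIU1 x hx z hz).1
    have he : Real.exp (-(lam₀ * 1)) = Real.exp (-lam₀) := by norm_num
    rw [he, ha_def]
    calc c₁⁻¹ * Real.exp (-lam₀) * (φ x * ψ z)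
        = Real.exp (-lam₀) * (c₁⁻¹ * (φ x * ψ z)) := by ring
      _ ≤ Real.exp (-lam₀) * p 1 x z := by
          exact mul_le_mul_of_nonneg_left h (le_of_lt (Real.exp_pos _))
  -- the eigenvalue identities with the exponential factor
  have heigφ : ∀ t, 0 < t → ∀ x ∈ D,
      (∫ z in D, Real.exp (-(lam₀ * t)) * (p t x z * φ z)) = φ x := by
    intro t ht x hx
    rw [integral_const_mul, hφeig t ht x hx, ← mul_assoc, ← Real.exp_add]
    norm_num
  have heigψ : ∀ t, 0 < t → ∀ y ∈ D,
      (∫ z in D, Real.exp (-(lam₀ * t)) * (p t z y * ψ z)) = ψ y := by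
    intro t ht y hy
    rw [integral_const_mul, hψeig t ht y hy, ← mul_assoc, ← Real.exp_add]
    norm_num
  -- ε and r
  set ε : ℝ := a * m with hε_def
  have hε : 0 < ε := mul_pos ha hm
  have hε1 : ε ≤ 1 := by
    have hφx₀ : 0 < φ x₀ := hφpos x₀ hx₀
    have hle : (∫ z in D, (a * φ x₀) * (ψ z * φ z))
        ≤ ∫ z in D, Real.exp (-(lam₀ * 1)) * (p 1 x₀ z * φ z) := by
      refine setIntegral_mono_on (BMint _ (BMconst _ _ (BMmul _ _ BMψ BMφ)))
        (BMint _ (BMconst _ _ (BMmul _ _ (BMp1 1 one_pos x₀ hx₀) BMφ))) hD ?_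
      intro z hz
      have h1 := hA x₀ hx₀ z hz
      have h2 : (0:ℝ) ≤ φ z := le_of_lt (hφpos z hz)
      calc (a * φ x₀) * (ψ z * φ z) = (a * (φ x₀ * ψ z)) * φ z := by ring
        _ ≤ (Real.exp (-(lam₀ * 1)) * p 1 x₀ z) * φ z := mul_le_mul_of_nonneg_right h1 h2
        _ = Real.exp (-(lam₀ * 1)) * (p 1 x₀ z * φ z) := by ring
    rw [integral_const_mul, hψφ, heigφ 1 one_pos x₀ hx₀] at hle
    have : ε * φ x₀ ≤ 1 * φ x₀ := by
      rw [hε_def]; nlinarith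
    exact le_of_mul_le_mul_right (by linarith) hφx₀
  set r : ℝ := max (1 - ε) (1/2) with hr_def
  have hr0 : 0 < r := lt_of_lt_of_le (by norm_num) (le_max_right _ _)
  have hr1 : r < 1 := max_lt (by linarith) (by norm_num)
  have h1εr : 1 - ε ≤ r := le_max_left _ _
  -- the uniform bound constant
  set C₂ : ℝ := c₂ * Real.exp (-(lam₀ / 2)) with hC₂_def
  have hC₂ : 0 < C₂ := mul_pos (lt_of_lt_of_le one_pos hc₂) (Real.exp_pos _)
  set K : ℝ := C₂ + 1 / m with hK_def
  have hK : 0 < K := by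
    rw [hK_def]
    have h1 : 0 < 1 / m := by positivity
    linarith
  -- uniform upper bound for t ∈ (1,2]
  have hub : ∀ t : ℝ, 1 < t → ∀ x ∈ D, ∀ y ∈ D,
      Real.exp (-(lam₀ * t)) * p t x y ≤ C₂ * (φ x * ψ y) := by
    intro t ht x hx y hy
    have hs : (0:ℝ) < t - 1/2 := by linarith
    have hck := hCK (t - 1/2) hs (1/2) (by norm_num) x hx y hy
    have htt : t - 1/2 + 1/2 = t := by ring
    rw [htt] at hck
    have hstep : (∫ z in D, p (t - 1/2) x z * p (1/2) z y)
        ≤ ∫ z in D, (c₂ * ψ y) * (p (t - 1/2) x z * φ z) := by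
      refine setIntegral_mono_on
        (BMint _ (BMmul _ _ (BMp1 _ hs x hx) (BMp2 _ (by norm_num) y hy)))
        (BMint _ (BMconst _ _ (BMmul _ _ (BMp1 _ hs x hx) BMφ))) hD ?_
      intro z hz
      have h1 := (hIU2 z hz y hy).2
      have h2 : (0:ℝ) ≤ p (t - 1/2) x z := le_of_lt (hppos _ hs x hx z hz)
      calc p (t - 1/2) x z * p (1/2) z y
          ≤ p (t - 1/2) x z * (c₂ * (φ z * ψ y)) := mul_le_mul_of_nonneg_left h1 h2
        _ = (c₂ * ψ y) * (p (t - 1/2) x z * φ z) := by ring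
    rw [integral_const_mul, hφeig _ hs x hx] at hstep
    rw [hck]
    have hE : (0:ℝ) < Real.exp (-(lam₀ * t)) := Real.exp_pos _
    have key : Real.exp (-(lam₀ * t)) * (c₂ * ψ y * (Real.exp (lam₀ * (t - 1/2)) * φ x))
        = C₂ * (φ x * ψ y) := by
      rw [hC₂_def]
      have hee : Real.exp (-(lam₀ * t)) * Real.exp (lam₀ * (t - 1/2))
          = Real.exp (-(lam₀ / 2)) := by
        rw [← Real.exp_add]; congr 1; ring
      calc Real.exp (-(lam₀ * t)) * (c₂ * ψ y * (Real.exp (lam₀ * (t - 1/2)) * φ x))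
          = (Real.exp (-(lam₀ * t)) * Real.exp (lam₀ * (t - 1/2))) * (c₂ * (φ x * ψ y)) := by
            ring
        _ = c₂ * Real.exp (-(lam₀ / 2)) * (φ x * ψ y) := by rw [hee]; ring
    calc Real.exp (-(lam₀ * t)) * (∫ z in D, p (t - 1/2) x z * p (1/2) z y)
        ≤ Real.exp (-(lam₀ * t)) * (c₂ * ψ y * (Real.exp (lam₀ * (t - 1/2)) * φ x)) :=
          mul_le_mul_of_nonneg_left hstep (le_of_lt hE)
      _ = C₂ * (φ x * ψ y) := key
  -- main inductive claim
  have main : ∀ n : ℕ, ∀ t : ℝ, 1 < t → t ≤ 2 → ∀ x ∈ D, ∀ y ∈ D,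
      |Real.exp (-(lam₀ * ((n:ℝ) + t))) * p ((n:ℝ) + t) x y - φ x * ψ y / m|
        ≤ K * r ^ n * (φ x * ψ y) := by
    intro n
    induction n with
    | zero =>
      intro t ht1 ht2 x hx y hy
      have h0 : ((0:ℕ):ℝ) + t = t := by norm_num
      rw [h0]
      have hφψ : 0 < φ x * ψ y := mul_pos (hφpos x hx) (hψpos y hy)
      have hup := hub t ht1 x hx y hy
      have hEp : 0 < Real.exp (-(lam₀ * t)) * p t x y :=
        mul_pos (Real.exp_pos _) (hppos t (by linarith) x hx y hy)
      have hKexp : K * r ^ 0 * (φ x * ψ y) = C₂ * (φ x * ψ y) + (1/m) * (φ x * ψ y) := by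
        rw [pow_zero, hK_def]; ring
      rw [hKexp, abs_le]
      constructor
      · have : φ x * ψ y / m = (1/m) * (φ x * ψ y) := by ring
        nlinarith
      · have : φ x * ψ y / m = (1/m) * (φ x * ψ y) := by ring
        nlinarith [mul_pos (mul_pos (one_div_pos.2 hm) (hφpos x hx)) (hψpos y hy)]
    | succ n ih =>
      intro t ht1 ht2 x hx y hy
      set T : ℝ := (n:ℝ) + t with hT_def
      have hT : 0 < T := by positivity
      have hcast : ((n+1:ℕ):ℝ) + t = 1 + T := by push_cast; rw [hT_def]; ring
      rw [hcast]
      -- abbreviations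
      set e1 : ℝ := Real.exp (-(lam₀ * 1)) with he1_def
      set eT : ℝ := Real.exp (-(lam₀ * T)) with heT_def
      have he1pos : 0 < e1 := Real.exp_pos _
      have heTpos : 0 < eT := Real.exp_pos _
      -- the four basic integrands
      have int1 : IntegrableOn (fun z => (e1 * eT) * (p 1 x z * p T z y)) D volume :=
        BMint _ (BMconst _ _ (BMmul _ _ (BMp1 1 one_pos x hx) (BMp2 T hT y hy)))
      have int2 : IntegrableOn (fun z => (e1 * (ψ y / m)) * (p 1 x z * φ z)) D volume :=
        BMint _ (BMconst _ _ (BMmul _ _ (BMp1 1 one_pos x hx) BMφ))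
      have int3 : IntegrableOn (fun z => (a * φ x * eT) * (p T z y * ψ z)) D volume :=
        BMint _ (BMconst _ _ (BMmul _ _ (BMp2 T hT y hy) BMψ))
      have int4 : IntegrableOn (fun z => (a * φ x * (ψ y / m)) * (φ z * ψ z)) D volume :=
        BMint _ (BMconst _ _ (BMmul _ _ BMφ BMψ))
      -- A and B
      set A : EuclideanSpace ℝ (Fin d) → ℝ := fun z => e1 * p 1 x z - a * (φ x * ψ z)
        with hA_def
      set B : EuclideanSpace ℝ (Fin d) → ℝ := fun z => eT * p T z y - φ z * ψ y / m
        with hB_def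
      have hABexp : (fun z => A z * B z) = fun z =>
          (e1 * eT) * (p 1 x z * p T z y) - (e1 * (ψ y / m)) * (p 1 x z * φ z)
          - (a * φ x * eT) * (p T z y * ψ z) + (a * φ x * (ψ y / m)) * (φ z * ψ z) := by
        funext z; rw [hA_def, hB_def]; ring
      have intAB : IntegrableOn (fun z => A z * B z) D volume := by
        rw [hABexp]; exact ((int1.sub int2).sub int3).add int4
      -- the key identity
      have i12 : IntegrableOn (fun z => (e1 * eT) * (p 1 x z * p T z y)
          - (e1 * (ψ y / m)) * (p 1 x z * φ z)) D volume := int1.sub int2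
      have i123 : IntegrableOn (fun z => (e1 * eT) * (p 1 x z * p T z y)
          - (e1 * (ψ y / m)) * (p 1 x z * φ z)
          - (a * φ x * eT) * (p T z y * ψ z)) D volume := i12.sub int3
      have hid : (∫ z in D, A z * B z)
          = Real.exp (-(lam₀ * (1 + T))) * p (1 + T) x y - φ x * ψ y / m := by
        rw [hABexp, integral_add i123 int4, integral_sub i12 int3, integral_sub int1 int2]
        have e1' : (∫ z in D, (e1 * eT) * (p 1 x z * p T z y))
            = Real.exp (-(lam₀ * (1 + T))) * p (1 + T) x y := by
          rw [integral_const_mul, ← hCK 1 one_pos T hT x hx y hy]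
          congr 1
          rw [he1_def, heT_def, ← Real.exp_add]; congr 1; ring
        have e2' : (∫ z in D, (e1 * (ψ y / m)) * (p 1 x z * φ z))
            = φ x * ψ y / m := by
          rw [integral_const_mul, hφeig 1 one_pos x hx, he1_def]
          have hee : Real.exp (-(lam₀ * 1)) * Real.exp (lam₀ * 1) = 1 := by
            rw [← Real.exp_add]; norm_num
          calc Real.exp (-(lam₀ * 1)) * (ψ y / m) * (Real.exp (lam₀ * 1) * φ x)
              = (Real.exp (-(lam₀ * 1)) * Real.exp (lam₀ * 1)) * (ψ y / m * φ x) := by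
                ring
            _ = φ x * ψ y / m := by rw [hee]; ring
        have e3' : (∫ z in D, (a * φ x * eT) * (p T z y * ψ z))
            = a * φ x * ψ y := by
          rw [integral_const_mul, hψeig T hT y hy, heT_def]
          have hee : Real.exp (-(lam₀ * T)) * Real.exp (lam₀ * T) = 1 := by
            rw [← Real.exp_add]; norm_num
          calc a * φ x * Real.exp (-(lam₀ * T)) * (Real.exp (lam₀ * T) * ψ y)
              = (Real.exp (-(lam₀ * T)) * Real.exp (lam₀ * T)) * (a * φ x * ψ y) := by
                ring
            _ = a * φ x * ψ y := by rw [hee]; ring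
        have e4' : (∫ z in D, (a * φ x * (ψ y / m)) * (φ z * ψ z))
            = a * φ x * ψ y := by
          rw [integral_const_mul, ← hm_def, mul_assoc, div_mul_cancel₀ _ (ne_of_gt hm)]
        rw [e1', e2', e3', e4']
        ring
      -- nonnegativity of A on D, and the bound on B from ih
      have hAnn : ∀ z ∈ D, 0 ≤ A z := by
        intro z hz
        have h := hA x hx z hz
        simp only [hA_def]
        linarith
      have hBbd : ∀ z ∈ D, |B z| ≤ K * r ^ n * (φ z * ψ y) := by
        intro z hz
        simp only [hB_def]
        exact ih t ht1 ht2 z hz y hy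
      -- integrability of |A*B| and of the dominating function
      have BMA : BM A := by
        rw [hA_def]
        exact BMsub _ _ (BMconst _ _ (BMp1 1 one_pos x hx))
          (BMconst _ _ (BMmul (fun z => φ x) _ ⟨aemeasurable_const, |φ x|,
            fun z hz => le_refl _⟩ BMψ))
      have BMB : BM B := by
        rw [hB_def]
        refine BMsub _ _ (BMconst _ _ (BMp2 T hT y hy)) ?_
        have : (fun z => φ z * ψ y / m) = fun z => (ψ y / m) * φ z := by
          funext z; ring
        rw [this]
        exact BMconst _ _ BMφ
      have intABabs : IntegrableOn (fun z => |A z| * |B z|) D volume := by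
        have h := intAB.abs
        simp only [abs_mul] at h
        exact h
      have intdom : IntegrableOn (fun z => (K * r ^ n * ψ y) * (A z * φ z)) D volume :=
        BMint _ (BMconst _ _ (BMmul _ _ BMA BMφ))
      -- the estimate
      have hest : |∫ z in D, A z * B z| ≤ ∫ z in D, (K * r ^ n * ψ y) * (A z * φ z) := by
        calc |∫ z in D, A z * B z| ≤ ∫ z in D, |A z| * |B z| := by
              simpa [Real.norm_eq_abs, abs_mul] using
                norm_integral_le_integral_norm (μ := volume.restrict D)
                  (fun z => A z * B z)
          _ ≤ ∫ z in D, (K * r ^ n * ψ y) * (A z * φ z) := by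
              refine setIntegral_mono_on intABabs intdom hD ?_
              intro z hz
              rw [abs_of_nonneg (hAnn z hz)]
              calc A z * |B z| ≤ A z * (K * r ^ n * (φ z * ψ y)) :=
                    mul_le_mul_of_nonneg_left (hBbd z hz) (hAnn z hz)
                _ = (K * r ^ n * ψ y) * (A z * φ z) := by ring
      -- evaluate the dominating integral
      have hAφ : (∫ z in D, A z * φ z) = φ x * (1 - ε) := by
        have hAφexp : (fun z => A z * φ z)
            = fun z => e1 * (p 1 x z * φ z) - (a * φ x) * (ψ z * φ z) := by
          funext z; rw [hA_def]; ring
        rw [hAφexp, integral_sub (BMint _ (BMconst _ _ (BMmul _ _ (BMp1 1 one_pos x hx) BMφ)))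
          (BMint _ (BMconst _ _ (BMmul _ _ BMψ BMφ)))]
        rw [integral_const_mul, integral_const_mul, hψφ, hφeig 1 one_pos x hx]
        rw [he1_def, ← mul_assoc, ← Real.exp_add]
        rw [hε_def]
        norm_num; ring
      have hdom : (∫ z in D, (K * r ^ n * ψ y) * (A z * φ z))
          = K * r ^ n * ψ y * (φ x * (1 - ε)) := by
        rw [integral_const_mul, hAφ]
      -- conclude
      have hKrn : 0 ≤ K * r ^ n * ψ y := by
        have hψy := le_of_lt (hψpos y hy)
        positivity
      calc |Real.exp (-(lam₀ * (1 + T))) * p (1 + T) x y - φ x * ψ y / m|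
          = |∫ z in D, A z * B z| := by rw [hid]
        _ ≤ ∫ z in D, (K * r ^ n * ψ y) * (A z * φ z) := hest
        _ = K * r ^ n * ψ y * (φ x * (1 - ε)) := hdom
        _ ≤ K * r ^ n * ψ y * (φ x * r) :=
            mul_le_mul_of_nonneg_left
              (mul_le_mul_of_nonneg_left h1εr (le_of_lt (hφpos x hx))) hKrn
        _ = K * r ^ (n+1) * (φ x * ψ y) := by ring
  -- final assembly
  set ν : ℝ := -Real.log r with hν_def
  have hν : 0 < ν := by
    rw [hν_def]
    have := Real.log_neg hr0 hr1
    linarith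
  refine ⟨m * K * Real.exp (2 * ν), by positivity, ν, hν, ?_⟩
  intro t ht x hx y hy
  have ht0 : (0:ℝ) < t := by linarith
  -- choose n and s
  set n : ℕ := ⌈t⌉₊ - 2 with hn_def
  have h2ceil : 2 ≤ ⌈t⌉₊ := by
    have : (1:ℕ) < ⌈t⌉₊ := Nat.lt_ceil.2 (by exact_mod_cast ht)
    omega
  have hncast : (n:ℝ) = (⌈t⌉₊ : ℝ) - 2 := by
    rw [hn_def, Nat.cast_sub h2ceil]; norm_num
  set s : ℝ := t - n with hs_def
  have hs1 : 1 < s := by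
    rw [hs_def, hncast]
    have := Nat.ceil_lt_add_one (le_of_lt ht0)
    linarith
  have hs2 : s ≤ 2 := by
    rw [hs_def, hncast]
    have := Nat.le_ceil t
    linarith
  have hns : (n:ℝ) + s = t := by rw [hs_def]; ring
  have hmain := main n s hs1 hs2 x hx y hy
  rw [hns] at hmain
  have hφψ : 0 < φ x * ψ y := mul_pos (hφpos x hx) (hψpos y hy)
  have hφψne : φ x * ψ y ≠ 0 := ne_of_gt hφψ
  have hmne : m ≠ 0 := ne_of_gt hm
  have hφne : φ x ≠ 0 := ne_of_gt (hφpos x hx)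
  have hψne : ψ y ≠ 0 := ne_of_gt (hψpos y hy)
  have hrw : Real.exp (-(lam₀ * t)) * m * p t x y / (φ x * ψ y) - 1
      = (m / (φ x * ψ y)) * (Real.exp (-(lam₀ * t)) * p t x y - φ x * ψ y / m) := by
    field_simp
  rw [hrw, abs_mul, abs_of_pos (div_pos hm hφψ)]
  have heq : (m / (φ x * ψ y)) * (K * r ^ n * (φ x * ψ y)) = m * K * r ^ n := by
    field_simp
  have hrn : r ^ n ≤ Real.exp (2 * ν) * Real.exp (-(ν * t)) := by
    have h1 : r ^ n = Real.exp ((n:ℝ) * Real.log r) := by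
      rw [Real.exp_nat_mul, Real.exp_log hr0]
    have hlogr : Real.log r ≤ 0 := le_of_lt (Real.log_neg hr0 hr1)
    have hn_ge : t - 2 ≤ (n:ℝ) := by
      rw [hncast]
      have := Nat.le_ceil t
      linarith
    have h2 : (n:ℝ) * Real.log r ≤ (t - 2) * Real.log r :=
      mul_le_mul_of_nonpos_right hn_ge hlogr
    have h3 : (t - 2) * Real.log r = 2 * ν + -(ν * t) := by rw [hν_def]; ring
    rw [h1, ← Real.exp_add]
    exact le_trans (Real.exp_le_exp.2 h2) (le_of_eq (by rw [h3]))
  calc (m / (φ x * ψ y)) * |Real.exp (-(lam₀ * t)) * p t x y - φ x * ψ y / m|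
      ≤ (m / (φ x * ψ y)) * (K * r ^ n * (φ x * ψ y)) :=
        mul_le_mul_of_nonneg_left hmain (le_of_lt (div_pos hm hφψ))
    _ = m * K * r ^ n := heq
    _ ≤ m * K * (Real.exp (2 * ν) * Real.exp (-(ν * t))) := by
        apply mul_le_mul_of_nonneg_left hrn
        positivity
    _ = m * K * Real.exp (2 * ν) * Real.exp (-(ν * t)) := by ring
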